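/- Let g be a real Lie algebra with an abelian complex structure J and a J-invariant inner product g(·,·). Define T^B(x,y,z) = -g([x,y],z) - g([y,z],x) - g([z,x],y) and dT^B(w,x,y,z) = -T^B([w,x],y,z) + T^B([w,y],x,z) - T^B([w,z],x,y) - T^B([x,y],w,z) + T^B([x,z],w,y) - T^B([y,z],w,x). Then dT^B(w,x,y,z) = 2( g([y,z],[w,x]) - g([x,z],[w,y]) + g([x,y],[w,z]) ) for all w,x,y,z ∈ g. -/
import Mathlib


/-- For an abelian complex structure with a J-invariant inner product,
the Chevalley–Eilenberg differential of the Bismut torsion 3-form equals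
`2( g([y,z],[w,x]) - g([x,z],[w,y]) + g([x,y],[w,z]) )`. -/
theorem dT_bismut_formula
    {L : Type*} [LieRing L] [LieAlgebra ℝ L]
    (J : L →ₗ[ℝ] L)
    (hJ2 : ∀ x : L, J (J x) = -x)
    (hab : ∀ x y : L, ⁅J x, J y⁆ = ⁅x, y⁆)
    (g : L →ₗ[ℝ] L →ₗ[ℝ] ℝ)
    (hsymm : ∀ x y : L, g x y = g y x)
    (hpos : ∀ x : L, x ≠ 0 → 0 < g x x)
    (hJinv : ∀ x y : L, g (J x) (J y) = g x y)
    (T : L → L → L → ℝ)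
    (hT : ∀ x y z : L, T x y z = -g ⁅x, y⁆ z - g ⁅y, z⁆ x - g ⁅z, x⁆ y)
    (dT : L → L → L → L → ℝ)
    (hdT : ∀ w x y z : L, dT w x y z =
      -T ⁅w, x⁆ y z + T ⁅w, y⁆ x z - T ⁅w, z⁆ x y
      - T ⁅x, y⁆ w z + T ⁅x, z⁆ w y - T ⁅y, z⁆ w x) :
    ∀ w x y z : L, dT w x y z =
      2 * (g ⁅y, z⁆ ⁅w, x⁆ - g ⁅x, z⁆ ⁅w, y⁆ + g ⁅x, y⁆ ⁅w, z⁆) := by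
  -- skew-symmetry of the bracket, paired with `g`
  have gadd : ∀ a b c : L, g ⁅a, b⁆ c + g ⁅b, a⁆ c = 0 := by
    intro a b c
    have h : (⁅b, a⁆ : L) = -⁅a, b⁆ := by rw [← lie_skew]
    rw [h, map_neg, LinearMap.neg_apply]
    ring
  -- Jacobi identity, paired with `g`
  have jac2 : ∀ a b c d : L,
      g ⁅⁅a, b⁆, c⁆ d - g ⁅⁅a, c⁆, b⁆ d + g ⁅⁅b, c⁆, a⁆ d = 0 := by
    intro a b c d
    have h : (⁅⁅a, b⁆, c⁆ : L) - ⁅⁅a, c⁆, b⁆ + ⁅⁅b, c⁆, a⁆ = 0 := by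
      have hcb : (⁅c, b⁆ : L) = -⁅b, c⁆ := by rw [← lie_skew]
      have hca : (⁅c, a⁆ : L) = -⁅a, c⁆ := by rw [← lie_skew]
      have hba : (⁅b, a⁆ : L) = -⁅a, b⁆ := by rw [← lie_skew]
      have h2 : (⁅c, ⁅a, b⁆⁆ : L) = -⁅⁅a, b⁆, c⁆ := by rw [← lie_skew]
      simp only [lie_lie, hcb, hca, hba, lie_neg, h2]
      abel
    have := congrArg (fun v => g v d) h
    simpa [map_sub, map_add] using this
  intro w x y z
  rw [hdT, hT, hT, hT, hT, hT, hT]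
  linear_combination
    hsymm ⁅w, x⁆ ⁅y, z⁆ + hsymm ⁅x, z⁆ ⁅w, y⁆ + hsymm ⁅w, z⁆ ⁅x, y⁆
    + jac2 w x y z - jac2 w x z y + jac2 w y z x - jac2 x y z w
    + gadd z ⁅w, x⁆ y + gadd y ⁅w, z⁆ x - gadd z ⁅w, y⁆ x
    + gadd z ⁅x, y⁆ w - gadd y ⁅x, z⁆ w + gadd x ⁅y, z⁆ w
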